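/- Let α', β' ∈ ℂ and let τ : ℤ → ℂ be a Somos 5 sequence with coefficients α', β' such that τ_n ≠ 0 for all n ∈ ℤ. Then the sequence h_n = τ_{n+2} τ_{n-1}/(τ_{n+1} τ_n) satisfies the second order nonlinear mapping h_{n-1} h_n h_{n+1} = α' h_n + β' for all n ∈ ℤ. -/

import Mathlib

/-- For a nonvanishing Somos 5 sequence `τ` with coefficients `α', β'`,
the quantity `h_n = τ_{n+2} τ_{n-1}/(τ_{n+1} τ_n)` satisfies the second order map
`h_{n-1} h_n h_{n+1} = α' h_n + β'`. -/
theorem somos5_to_h_map (α' β' : ℂ) (τ : ℤ → ℂ)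
    (hτ : ∀ n : ℤ, τ (n + 3) * τ (n - 2) = α' * (τ (n + 2) * τ (n - 1)) + β' * (τ (n + 1) * τ n))
    (hne : ∀ n : ℤ, τ n ≠ 0)
    (h : ℤ → ℂ) (hh : ∀ n : ℤ, h n = τ (n + 2) * τ (n - 1) / (τ (n + 1) * τ n)) :
    ∀ n : ℤ, h (n - 1) * h n * h (n + 1) = α' * h n + β' := by
  intro n
  have key := hτ n
  rw [hh (n - 1), hh n, hh (n + 1)]
  have e1 : n - 1 + 2 = n + 1 := by ring
  have e2 : n - 1 - 1 = n - 2 := by ring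
  have e3 : n - 1 + 1 = n := by ring
  have e4 : n + 1 + 2 = n + 3 := by ring
  have e5 : n + 1 - 1 = n := by ring
  have e6 : n + 1 + 1 = n + 2 := by ring
  rw [e1, e2, e3, e4, e5, e6]
  have := hne (n+1); have := hne n; have := hne (n-1); have := hne (n+2)
  field_simp
  linear_combination key
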